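/- Let A be a real parameter and consider the Glukhovsky–Dolzhansky system with Ra = C = 0 and σ = 1, namely ẋ = A y z − x, ẏ = −x z − y, ż = −z + x y. If (x, y, z) : I → ℝ³ is a differentiable solution on an interval I and x(t)² − A z(t)² ≠ 0 for all t ∈ I, then the function t ↦ (y(t)² + z(t)²)/(x(t)² − A z(t)²) is constant on I; that is, Φ = (y² + z²)/(x² − A z²) is a rational first integral of the system. -/

import Mathlib

/-- For the Glukhovsky–Dolzhansky system with `Ra = C = 0`, `σ = 1`,
namely `ẋ = A y z − x, ẏ = −x z − y, ż = −z + x y`, the function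
`Φ = (y² + z²)/(x² − A z²)` is a rational first integral: it is constant along every
differentiable solution on an interval on which `x² − A z² ≠ 0`. -/
theorem gd_rational_first_integral_Ra_C_zero_sigma_one
    (A : ℝ) (I : Set ℝ) (hI : Convex ℝ I) (x y z : ℝ → ℝ)
    (hx : ∀ t ∈ I, HasDerivAt x (A * y t * z t - x t) t)
    (hy : ∀ t ∈ I, HasDerivAt y (-(x t * z t) - y t) t)
    (hz : ∀ t ∈ I, HasDerivAt z (-z t + x t * y t) t)
    (hne : ∀ t ∈ I, x t ^ 2 - A * z t ^ 2 ≠ 0) :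
    ∀ s ∈ I, ∀ t ∈ I,
      (y s ^ 2 + z s ^ 2) / (x s ^ 2 - A * z s ^ 2) =
        (y t ^ 2 + z t ^ 2) / (x t ^ 2 - A * z t ^ 2) := by
  intro s hs t ht
  have key : ∀ r ∈ I, HasDerivWithinAt
      (fun τ => (y τ ^ 2 + z τ ^ 2) / (x τ ^ 2 - A * z τ ^ 2)) ((fun _ => (0:ℝ)) r) I r := by
    intro r hr
    have hu : HasDerivAt (fun τ => y τ ^ 2 + z τ ^ 2)
        (-2 * (y r ^ 2 + z r ^ 2)) r := by
      have := ((hy r hr).fun_pow 2).fun_add ((hz r hr).fun_pow 2)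
      exact this.congr_deriv (by ring)
    have hv : HasDerivAt (fun τ => x τ ^ 2 - A * z τ ^ 2)
        (-2 * (x r ^ 2 - A * z r ^ 2)) r := by
      have h2 := ((hx r hr).fun_pow 2).fun_sub (((hz r hr).fun_pow 2).const_mul A)
      exact h2.congr_deriv (by ring)
    have hd := hu.div hv (hne r hr)
    have h0 : (-2 * (y r ^ 2 + z r ^ 2) * (x r ^ 2 - A * z r ^ 2) -
        (y r ^ 2 + z r ^ 2) * (-2 * (x r ^ 2 - A * z r ^ 2))) /
        (x r ^ 2 - A * z r ^ 2) ^ 2 = 0 := by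
      have : (-2 * (y r ^ 2 + z r ^ 2) * (x r ^ 2 - A * z r ^ 2) -
          (y r ^ 2 + z r ^ 2) * (-2 * (x r ^ 2 - A * z r ^ 2))) = 0 := by ring
      rw [this, zero_div]
    rw [h0] at hd
    exact hd.hasDerivWithinAt
  have bound : ∀ r ∈ I, ‖(fun _ => (0:ℝ)) r‖ ≤ 0 := by intro r _; simp
  have h := hI.norm_image_sub_le_of_norm_hasDerivWithin_le key bound ht hs
  rw [zero_mul] at h
  simpa [sub_eq_zero] using h.antisymm (norm_nonneg _)
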